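/- Let P = |0⟩⟨0| on ℂ^d. For every density matrix ρ on ℂ^d, let ρ̃ = PρP + (I_d−P)ρ(I_d−P). Then O^c(ρ̃) = O^c(ρ) and S(O(ρ̃)) ≥ S(O(ρ)); consequently S(O(ρ)) − S(O^c(ρ)) ≤ S(O(ρ̃)) − S(O^c(ρ̃)), i.e. the coherent information of O does not decrease when the input is replaced by its block-diagonal part with respect to the decomposition ℂ^d = span{|0⟩} ⊕ span{|1⟩,…,|d−1⟩}. -/

import Mathlib

open Matrix ComplexOrder

/-- Von Neumann entropy (base-2) of a matrix: −∑ λᵢ log₂ λᵢ over its eigenvalues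
(0 if the matrix is not Hermitian). -/
noncomputable def vnEntropy {n : ℕ} (ρ : Matrix (Fin n) (Fin n) ℂ) : ℝ :=
  if h : ρ.IsHermitian then -∑ i, (h.eigenvalues i) * Real.logb 2 (h.eigenvalues i) else 0

/-- The basis ket |i⟩ of ℂ^d (zero if out of range). -/
noncomputable def bket (d i : ℕ) : Fin d → ℂ := fun p => if (p : ℕ) = i then 1 else 0

/-- The projector |i⟩⟨i| on ℂ^d. -/
noncomputable def bproj (d i : ℕ) : Matrix (Fin d) (Fin d) ℂ :=
  Matrix.vecMulVec (bket d i) (star (bket d i))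

/-- Kraus operator K_k = μ_k|k⟩⟨0| + |d−1⟩⟨k+1| of the channel O. -/
noncomputable def KrO (d : ℕ) (μ : ℕ → ℝ) (k : ℕ) : Matrix (Fin d) (Fin d) ℂ :=
  ((μ k : ℝ) : ℂ) • Matrix.vecMulVec (bket d k) (star (bket d 0)) +
    Matrix.vecMulVec (bket d (d-1)) (star (bket d (k+1)))

/-- The channel O : M_d(ℂ) → M_d(ℂ) with parameters μ₀,…,μ_{d−2}. -/
noncomputable def chanO (d : ℕ) (μ : ℕ → ℝ) (X : Matrix (Fin d) (Fin d) ℂ) :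
    Matrix (Fin d) (Fin d) ℂ :=
  ∑ k ∈ Finset.range (d - 1), KrO d μ k * X * (KrO d μ k)ᴴ

/-- Kraus operator L_j = μ_j|j⟩⟨0| of O^c, for 0 ≤ j ≤ d−2. -/
noncomputable def LrO (d : ℕ) (μ : ℕ → ℝ) (j : ℕ) : Matrix (Fin (d-1)) (Fin d) ℂ :=
  ((μ j : ℝ) : ℂ) • Matrix.vecMulVec (bket (d-1) j) (star (bket d 0))

/-- Kraus operator L_{d−1} = ∑_{i=1}^{d−1}|i−1⟩⟨i| of O^c. -/
noncomputable def VrO (d : ℕ) : Matrix (Fin (d-1)) (Fin d) ℂ :=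
  Matrix.of fun a b => if (b : ℕ) = (a : ℕ) + 1 then 1 else 0

/-- The complementary channel O^c : M_d(ℂ) → M_{d−1}(ℂ). -/
noncomputable def chanOc (d : ℕ) (μ : ℕ → ℝ) (X : Matrix (Fin d) (Fin d) ℂ) :
    Matrix (Fin (d-1)) (Fin (d-1)) ℂ :=
  (∑ j ∈ Finset.range (d - 1), LrO d μ j * X * (LrO d μ j)ᴴ) + VrO d * X * (VrO d)ᴴ

lemma vmv_mul_mul {m n n' m' : Type*} [Fintype n] [Fintype n']
    (u : m → ℂ) (v : n → ℂ) (X : Matrix n n' ℂ) (w : n' → ℂ) (z : m' → ℂ) :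
    Matrix.vecMulVec u v * X * Matrix.vecMulVec w z = (v ⬝ᵥ (X *ᵥ w)) • Matrix.vecMulVec u z := by
  ext a b
  simp only [Matrix.mul_apply, Matrix.vecMulVec_apply, Matrix.smul_apply, Matrix.mulVec,
    dotProduct, Finset.sum_mul, Finset.mul_sum, smul_eq_mul]
  rw [Finset.sum_comm]
  apply Finset.sum_congr rfl; intro q _
  apply Finset.sum_congr rfl; intro p _
  ring

lemma vmv_conjT {m n : Type*} (u : m → ℂ) (v : n → ℂ) :
    (Matrix.vecMulVec u (star v))ᴴ = Matrix.vecMulVec v (star u) := by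
  ext a b
  simp [Matrix.vecMulVec_apply, mul_comm]

lemma bket_coe {d i : ℕ} (hi : i < d) (p : Fin d) :
    bket d i p = if p = ⟨i, hi⟩ then 1 else 0 := by
  simp [bket, Fin.ext_iff]

lemma star_bket {d i : ℕ} (hi : i < d) (p : Fin d) :
    star (bket d i) p = if p = ⟨i, hi⟩ then 1 else 0 := by
  simp [bket, Fin.ext_iff, Pi.star_apply, apply_ite (star : ℂ → ℂ)]

lemma dot_bket {d d' : ℕ} (X : Matrix (Fin d) (Fin d') ℂ) (i j : ℕ) (hi : i < d) (hj : j < d') :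
    star (bket d i) ⬝ᵥ X *ᵥ bket d' j = X ⟨i, hi⟩ ⟨j, hj⟩ := by
  simp [dotProduct, Matrix.mulVec, star_bket hi, bket_coe hj, Finset.mul_sum]

lemma bket_zero {d i : ℕ} (hi : d ≤ i) : bket d i = 0 := by
  funext p
  simp [bket]
  omega

section spectral
variable {n : ℕ} {A : Matrix (Fin n) (Fin n) ℂ}

lemma diag_formula (hA : A.IsHermitian) (i : Fin n) :
    A i i = ((∑ j, Complex.normSq ((hA.eigenvectorUnitary : Matrix (Fin n) (Fin n) ℂ) i j)
      * hA.eigenvalues j : ℝ) : ℂ) := by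
  conv_lhs => rw [hA.spectral_theorem, Unitary.conjStarAlgAut_apply]
  simp only [Matrix.mul_apply, Matrix.diagonal_apply, Function.comp_apply, mul_ite, mul_zero,
    Finset.sum_ite_eq', Finset.mem_univ, if_true, Matrix.star_apply, Complex.star_def]
  push_cast
  refine Finset.sum_congr rfl fun j _ => ?_
  rw [mul_right_comm, Complex.mul_conj]; rfl

lemma row_sum_one (hA : A.IsHermitian) (i : Fin n) :
    ∑ j, Complex.normSq ((hA.eigenvectorUnitary : Matrix (Fin n) (Fin n) ℂ) i j) = 1 := by
  have h := Matrix.mem_unitaryGroup_iff.mp hA.eigenvectorUnitary.2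
  have h2 := congrFun (congrFun (congrArg (fun M => (M : Matrix (Fin n) (Fin n) ℂ)) h) i) i
  simp only [Matrix.mul_apply, Matrix.star_apply, Complex.star_def, Matrix.one_apply_eq] at h2
  have h3 : ((∑ j, Complex.normSq ((hA.eigenvectorUnitary : Matrix (Fin n) (Fin n) ℂ) i j) : ℝ) : ℂ) = 1 := by
    rw [← h2]; push_cast
    exact Finset.sum_congr rfl fun j _ => (Complex.mul_conj _).symm
  exact_mod_cast h3

lemma col_sum_one (hA : A.IsHermitian) (j : Fin n) :
    ∑ i, Complex.normSq ((hA.eigenvectorUnitary : Matrix (Fin n) (Fin n) ℂ) i j) = 1 := by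
  have h := Matrix.mem_unitaryGroup_iff'.mp hA.eigenvectorUnitary.2
  have h2 := congrFun (congrFun (congrArg (fun M => (M : Matrix (Fin n) (Fin n) ℂ)) h) j) j
  simp only [Matrix.mul_apply, Matrix.star_apply, Complex.star_def, Matrix.one_apply_eq] at h2
  have h3 : ((∑ i, Complex.normSq ((hA.eigenvectorUnitary : Matrix (Fin n) (Fin n) ℂ) i j) : ℝ) : ℂ) = 1 := by
    rw [← h2]; push_cast
    refine Finset.sum_congr rfl fun i _ => ?_
    rw [mul_comm, Complex.mul_conj]
  exact_mod_cast h3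

lemma diag_re_formula (hA : A.IsHermitian) (i : Fin n) :
    (A i i).re = ∑ j, Complex.normSq ((hA.eigenvectorUnitary : Matrix (Fin n) (Fin n) ℂ) i j)
      * hA.eigenvalues j := by
  rw [diag_formula hA i, Complex.ofReal_re]

lemma diag_re_nonneg (hA : A.PosSemidef) (i : Fin n) : 0 ≤ (A i i).re := by
  rw [diag_re_formula hA.1 i]
  exact Finset.sum_nonneg fun j _ =>
    mul_nonneg (Complex.normSq_nonneg _) (hA.eigenvalues_nonneg j)

end spectral

section jensen
variable {n : ℕ} {A : Matrix (Fin n) (Fin n) ℂ}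

lemma diag_entry_real (hA : A.IsHermitian) (p : Fin n) : A p p = ((A p p).re : ℂ) := by
  rw [diag_formula hA p, Complex.ofReal_re]

lemma eig_formula_of_diag (hA : A.IsHermitian) (hod : ∀ i j, i ≠ j → A i j = 0) (j : Fin n) :
    hA.eigenvalues j = ∑ p, Complex.normSq ((hA.eigenvectorUnitary : Matrix (Fin n) (Fin n) ℂ) p j)
      * (A p p).re := by
  set U : Matrix (Fin n) (Fin n) ℂ := (hA.eigenvectorUnitary : Matrix (Fin n) (Fin n) ℂ) with hU
  have h := congrFun (congrFun hA.conjStarAlgAut_star_eigenvectorUnitary j) j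
  simp only [Unitary.conjStarAlgAut_star_apply, Matrix.mul_apply, Matrix.diagonal_apply_eq, Function.comp_apply,
    Matrix.star_apply, Complex.star_def, ← hU] at h
  have key : (∑ x, (∑ y, (starRingEnd ℂ) (U y j) * A y x) * U x j)
      = ((∑ p, Complex.normSq (U p j) * (A p p).re : ℝ) : ℂ) := by
    push_cast
    refine Finset.sum_congr rfl fun p _ => ?_
    rw [Finset.sum_eq_single p]
    · have hz : (starRingEnd ℂ) (U p j) * U p j = (Complex.normSq (U p j) : ℂ) := by
        rw [mul_comm, Complex.mul_conj]
      have hre := diag_entry_real hA p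
      linear_combination U p j * (starRingEnd ℂ) (U p j) * hre + ((A p p).re : ℂ) * hz
    · intro q _ hq
      simp [hod q p hq]
    · simp
  have h2 := h.symm.trans key
  exact Complex.ofReal_injective h2
end jensen

section jensen2
variable {n : ℕ} {A : Matrix (Fin n) (Fin n) ℂ}

lemma entSum_le_diagSum (hA : A.PosSemidef) :
    ∑ j, Real.negMulLog (hA.1.eigenvalues j) ≤ ∑ i, Real.negMulLog ((A i i).re) := by
  set U : Matrix (Fin n) (Fin n) ℂ := (hA.1.eigenvectorUnitary : Matrix (Fin n) (Fin n) ℂ) with hU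
  calc ∑ j, Real.negMulLog (hA.1.eigenvalues j)
      = ∑ j, (∑ i, Complex.normSq (U i j)) * Real.negMulLog (hA.1.eigenvalues j) := by
        refine Finset.sum_congr rfl fun j _ => ?_
        rw [col_sum_one hA.1 j, one_mul]
    _ = ∑ i, ∑ j, Complex.normSq (U i j) * Real.negMulLog (hA.1.eigenvalues j) := by
        rw [Finset.sum_comm]
        exact Finset.sum_congr rfl fun j _ => by rw [Finset.sum_mul]
    _ ≤ ∑ i, Real.negMulLog ((A i i).re) := by
        refine Finset.sum_le_sum fun i _ => ?_
        have h := Real.concaveOn_negMulLog.le_map_sum (t := Finset.univ)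
          (w := fun j => Complex.normSq (U i j)) (p := hA.1.eigenvalues)
          (fun j _ => Complex.normSq_nonneg _) (row_sum_one hA.1 i)
          (fun j _ => Set.mem_Ici.mpr (hA.eigenvalues_nonneg j))
        simp only [smul_eq_mul] at h; rw [diag_re_formula hA.1 i]; exact h

lemma diagSum_le_entSum (hA : A.PosSemidef) (hod : ∀ i j, i ≠ j → A i j = 0) :
    ∑ i, Real.negMulLog ((A i i).re) ≤ ∑ j, Real.negMulLog (hA.1.eigenvalues j) := by
  set U : Matrix (Fin n) (Fin n) ℂ := (hA.1.eigenvectorUnitary : Matrix (Fin n) (Fin n) ℂ) with hU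
  calc ∑ i, Real.negMulLog ((A i i).re)
      = ∑ i, (∑ j, Complex.normSq (U i j)) * Real.negMulLog ((A i i).re) := by
        refine Finset.sum_congr rfl fun i _ => ?_
        rw [row_sum_one hA.1 i, one_mul]
    _ = ∑ j, ∑ i, Complex.normSq (U i j) * Real.negMulLog ((A i i).re) := by
        rw [← Finset.sum_comm]
        exact Finset.sum_congr rfl fun i _ => by rw [Finset.sum_mul]
    _ ≤ ∑ j, Real.negMulLog (hA.1.eigenvalues j) := by
        refine Finset.sum_le_sum fun j _ => ?_
        have h := Real.concaveOn_negMulLog.le_map_sum (t := Finset.univ)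
          (w := fun i => Complex.normSq (U i j)) (p := fun i => (A i i).re)
          (fun i _ => Complex.normSq_nonneg _) (col_sum_one hA.1 j)
          (fun i _ => Set.mem_Ici.mpr (diag_re_nonneg hA i))
        simp only [smul_eq_mul] at h; rw [eig_formula_of_diag hA.1 hod j]; exact h

lemma vnEntropy_eq (hA : A.IsHermitian) :
    vnEntropy A = (∑ i, Real.negMulLog (hA.eigenvalues i)) / Real.log 2 := by
  have hlog : Real.log 2 ≠ 0 := (Real.log_pos one_lt_two).ne'
  rw [vnEntropy, dif_pos hA, eq_div_iff hlog, ← Finset.sum_neg_distrib, Finset.sum_mul]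
  refine Finset.sum_congr rfl fun i _ => ?_
  rw [Real.negMulLog, Real.logb]
  field_simp

lemma vnEntropy_le_of_diag_eq {B : Matrix (Fin n) (Fin n) ℂ} (hA : A.PosSemidef)
    (hB : B.PosSemidef) (hBod : ∀ i j, i ≠ j → B i j = 0) (hdiag : ∀ i, B i i = A i i) :
    vnEntropy A ≤ vnEntropy B := by
  rw [vnEntropy_eq hA.1, vnEntropy_eq hB.1]
  have hlog : (0:ℝ) < Real.log 2 := Real.log_pos one_lt_two
  rw [div_le_div_iff_of_pos_right hlog]
  calc ∑ i, Real.negMulLog (hA.1.eigenvalues i)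
      ≤ ∑ i, Real.negMulLog ((A i i).re) := entSum_le_diagSum hA
    _ = ∑ i, Real.negMulLog ((B i i).re) := by
        exact Finset.sum_congr rfl fun i _ => by rw [hdiag i]
    _ ≤ ∑ i, Real.negMulLog (hB.1.eigenvalues i) := diagSum_le_entSum hB hBod

end jensen2

section kraus
variable {d : ℕ} (μ : ℕ → ℝ)

lemma KrO_conj {k : ℕ} (hk : k < d - 1) (X : Matrix (Fin d) (Fin d) ℂ) :
    KrO d μ k * X * (KrO d μ k)ᴴ =
      ((μ k : ℂ) * (μ k : ℂ) * X ⟨0, by omega⟩ ⟨0, by omega⟩) •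
        Matrix.vecMulVec (bket d k) (star (bket d k)) +
      ((μ k : ℂ) * X ⟨0, by omega⟩ ⟨k+1, by omega⟩) •
        Matrix.vecMulVec (bket d k) (star (bket d (d-1))) +
      ((μ k : ℂ) * X ⟨k+1, by omega⟩ ⟨0, by omega⟩) •
        Matrix.vecMulVec (bket d (d-1)) (star (bket d k)) +
      (X ⟨k+1, by omega⟩ ⟨k+1, by omega⟩) •
        Matrix.vecMulVec (bket d (d-1)) (star (bket d (d-1))) := by
  have h0 : 0 < d := by omega
  have hkd : k < d := by omega
  have hk1 : k + 1 < d := by omega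
  have hdd : d - 1 < d := by omega
  rw [KrO, conjTranspose_add, conjTranspose_smul, vmv_conjT, vmv_conjT]
  simp only [add_mul, mul_add, Matrix.smul_mul, Matrix.mul_smul, vmv_mul_mul, smul_smul,
    dot_bket X 0 0 h0 h0, dot_bket X 0 (k+1) h0 hk1, dot_bket X (k+1) 0 hk1 h0,
    dot_bket X (k+1) (k+1) hk1 hk1, Complex.star_def, Complex.conj_ofReal]
  module

lemma LrO_conj {j : ℕ} (hd : 0 < d) (X : Matrix (Fin d) (Fin d) ℂ) :
    LrO d μ j * X * (LrO d μ j)ᴴ =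
      ((μ j : ℂ) * (μ j : ℂ) * X ⟨0, hd⟩ ⟨0, hd⟩) •
        Matrix.vecMulVec (bket (d-1) j) (star (bket (d-1) j)) := by
  rw [LrO, conjTranspose_smul, vmv_conjT]
  simp only [Matrix.smul_mul, Matrix.mul_smul, vmv_mul_mul, smul_smul,
    dot_bket X 0 0 hd hd, Complex.star_def, Complex.conj_ofReal]
  module

lemma VrO_conj_apply (X : Matrix (Fin d) (Fin d) ℂ) (a b : Fin (d-1)) :
    (VrO d * X * (VrO d)ᴴ) a b
      = X ⟨(a:ℕ)+1, by have := a.isLt; omega⟩ ⟨(b:ℕ)+1, by have := b.isLt; omega⟩ := by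
  have ha : (a:ℕ) + 1 < d := by have := a.isLt; omega
  have hb : (b:ℕ) + 1 < d := by have := b.isLt; omega
  simp only [Matrix.mul_apply, VrO, Matrix.conjTranspose_apply, Matrix.of_apply,
    show ∀ p : Fin d, ((p:ℕ) = (a:ℕ)+1) = (p = ⟨(a:ℕ)+1, ha⟩) from
      fun p => by rw [Fin.ext_iff],
    show ∀ q : Fin d, ((q:ℕ) = (b:ℕ)+1) = (q = ⟨(b:ℕ)+1, hb⟩) from
      fun q => by rw [Fin.ext_iff]]
  simp [apply_ite (star : ℂ → ℂ)]

end kraus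

section entries
variable {d : ℕ}

lemma bproj_apply (hd : 0 < d) (a b : Fin d) :
    bproj d 0 a b = if a = ⟨0,hd⟩ ∧ b = ⟨0,hd⟩ then 1 else 0 := by
  rw [bproj, Matrix.vecMulVec_apply, bket_coe hd, star_bket hd]
  split_ifs <;> simp_all

lemma Pmul_apply (hd : 0 < d) (ρ : Matrix (Fin d) (Fin d) ℂ) (a b : Fin d) :
    (bproj d 0 * ρ) a b = if a = ⟨0,hd⟩ then ρ ⟨0,hd⟩ b else 0 := by
  simp only [Matrix.mul_apply, bproj_apply hd, ite_mul, one_mul, zero_mul]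
  rw [Finset.sum_eq_single (⟨0,hd⟩ : Fin d)] <;> aesop

lemma mulP_apply (hd : 0 < d) (ρ : Matrix (Fin d) (Fin d) ℂ) (a b : Fin d) :
    (ρ * bproj d 0) a b = if b = ⟨0,hd⟩ then ρ a ⟨0,hd⟩ else 0 := by
  simp only [Matrix.mul_apply, bproj_apply hd, mul_ite, mul_one, mul_zero]
  rw [Finset.sum_eq_single (⟨0,hd⟩ : Fin d)] <;> aesop

lemma rhot_apply (hd : 0 < d) (ρ : Matrix (Fin d) (Fin d) ℂ) (a b : Fin d) :
    (bproj d 0 * ρ * bproj d 0 + (1 - bproj d 0) * ρ * (1 - bproj d 0)) a b =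
      if (a = ⟨0,hd⟩) = (b = ⟨0,hd⟩) then ρ a b else 0 := by
  have hexp : (1 - bproj d 0) * ρ * (1 - bproj d 0)
      = ρ - bproj d 0 * ρ - ρ * bproj d 0 + bproj d 0 * ρ * bproj d 0 := by noncomm_ring
  have hP : ∀ x y : Fin d, (bproj d 0 * ρ * bproj d 0) x y
      = if x = ⟨0,hd⟩ ∧ y = ⟨0,hd⟩ then ρ ⟨0,hd⟩ ⟨0,hd⟩ else 0 := by
    intro x y
    rw [bproj, vmv_mul_mul, dot_bket ρ 0 0 hd hd, Matrix.smul_apply, ← bproj,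
      bproj_apply hd, smul_eq_mul]
    split_ifs <;> simp
  rw [hexp]
  simp only [Matrix.add_apply, Matrix.sub_apply, hP, Pmul_apply hd, mulP_apply hd]
  by_cases ha : a = ⟨0,hd⟩ <;> by_cases hb : b = ⟨0,hd⟩ <;>
    simp [ha, hb]
end entries

/-- Replacing the input of O by its block-diagonal part with respect to
ℂ^d = span{|0⟩} ⊕ span{|1⟩,…,|d−1⟩} leaves O^c(ρ) unchanged and does not decrease
the output entropy of O, hence does not decrease the coherent information. -/
theorem stmt14 (d : ℕ) (hd : 3 ≤ d) (μ : ℕ → ℝ)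
    (hμ0 : ∀ j < d - 1, 0 ≤ μ j)
    (hμsum : ∑ j ∈ Finset.range (d - 1), (μ j) ^ 2 = 1)
    (ρ : Matrix (Fin d) (Fin d) ℂ) (hρ : ρ.PosSemidef) (hρtr : ρ.trace = 1) :
    let P : Matrix (Fin d) (Fin d) ℂ := bproj d 0
    let ρt : Matrix (Fin d) (Fin d) ℂ := P * ρ * P + (1 - P) * ρ * (1 - P)
    chanOc d μ ρt = chanOc d μ ρ ∧
    vnEntropy (chanO d μ ρ) ≤ vnEntropy (chanO d μ ρt) ∧
    vnEntropy (chanO d μ ρ) - vnEntropy (chanOc d μ ρ) ≤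
      vnEntropy (chanO d μ ρt) - vnEntropy (chanOc d μ ρt) := by
  intro P ρt
  have hd0 : 0 < d := by omega
  have hρt_apply : ∀ a b : Fin d, ρt a b = if (a = ⟨0,hd0⟩) = (b = ⟨0,hd0⟩) then ρ a b else 0 :=
    fun a b => rhot_apply hd0 ρ a b
  -- PosSemidef facts
  have hPH : (bproj d 0)ᴴ = bproj d 0 := by rw [bproj, vmv_conjT]
  have h1PH : (1 - bproj d 0)ᴴ = 1 - bproj d 0 := by
    rw [Matrix.conjTranspose_sub, Matrix.conjTranspose_one, hPH]
  have hρtPSD : ρt.PosSemidef := by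
    have h1 := hρ.mul_mul_conjTranspose_same (bproj d 0)
    have h2 := hρ.mul_mul_conjTranspose_same (1 - bproj d 0)
    rw [hPH] at h1; rw [h1PH] at h2
    exact h1.add h2
  have hchanOPSD : ∀ X : Matrix (Fin d) (Fin d) ℂ, X.PosSemidef → (chanO d μ X).PosSemidef := by
    intro X hX
    rw [chanO]
    exact Finset.sum_induction _ _ (fun A B hA hB => hA.add hB) Matrix.PosSemidef.zero
      (fun k _ => hX.mul_mul_conjTranspose_same (KrO d μ k))
  -- Part 1 : complementary channel unchanged
  have hOc : chanOc d μ ρt = chanOc d μ ρ := by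
    rw [chanOc, chanOc]
    congr 1
    · refine Finset.sum_congr rfl fun j hj => ?_
      rw [LrO_conj μ hd0, LrO_conj μ hd0, hρt_apply]
      simp
    · ext a b
      rw [VrO_conj_apply, VrO_conj_apply, hρt_apply]
      simp [Fin.ext_iff]
  -- per-Kraus-term diagonality
  have hterm : ∀ k, k < d - 1 → ∀ a b : Fin d,
      (KrO d μ k * ρt * (KrO d μ k)ᴴ) a b
        = if a = b then (KrO d μ k * ρ * (KrO d μ k)ᴴ) a b else 0 := by
    intro k hk a b
    have hk1 : k + 1 < d := by omega
    have hkd : k < d := by omega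
    have hdd : d - 1 < d := by omega
    rw [KrO_conj μ hk, KrO_conj μ hk]
    have e1 : ρt ⟨0, by omega⟩ ⟨0, by omega⟩ = ρ ⟨0,hd0⟩ ⟨0,hd0⟩ := by
      rw [hρt_apply]; simp
    have e2 : ρt ⟨0, by omega⟩ ⟨k+1, by omega⟩ = 0 := by
      rw [hρt_apply]; simp [Fin.ext_iff]
    have e3 : ρt ⟨k+1, by omega⟩ ⟨0, by omega⟩ = 0 := by
      rw [hρt_apply]; simp [Fin.ext_iff]
    have e4 : ρt ⟨k+1, by omega⟩ ⟨k+1, by omega⟩ = ρ ⟨k+1,hk1⟩ ⟨k+1,hk1⟩ := by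
      rw [hρt_apply]; simp
    rw [e1, e2, e3, e4]
    have hne : (⟨k, hkd⟩ : Fin d) ≠ ⟨d-1, hdd⟩ := by
      simp only [ne_eq, Fin.mk.injEq]; omega
    simp only [mul_zero, zero_smul, add_zero, zero_add, Matrix.add_apply, Matrix.smul_apply,
      Matrix.vecMulVec_apply, bket_coe hkd, bket_coe hdd, star_bket hkd, star_bket hdd,
      smul_eq_mul]
    by_cases hab : a = b <;> by_cases h1 : a = (⟨k, hkd⟩ : Fin d) <;>
      by_cases h2 : b = (⟨d-1, hdd⟩ : Fin d) <;> simp_all <;> intro h <;>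
        simp_all [Fin.ext_iff] <;> omega
  have hod : ∀ a b : Fin d, a ≠ b → chanO d μ ρt a b = 0 := by
    intro a b hab
    rw [chanO, Matrix.sum_apply]
    exact Finset.sum_eq_zero fun k hk => by
      rw [hterm k (Finset.mem_range.mp hk) a b, if_neg hab]
  have hdg : ∀ a : Fin d, chanO d μ ρt a a = chanO d μ ρ a a := by
    intro a
    rw [chanO, chanO, Matrix.sum_apply, Matrix.sum_apply]
    exact Finset.sum_congr rfl fun k hk => by
      rw [hterm k (Finset.mem_range.mp hk) a a, if_pos rfl]
  have hEnt : vnEntropy (chanO d μ ρ) ≤ vnEntropy (chanO d μ ρt) :=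
    vnEntropy_le_of_diag_eq (hchanOPSD ρ hρ) (hchanOPSD ρt hρtPSD)
      (fun i j hij => hod i j hij) (fun i => hdg i)
  exact ⟨hOc, hEnt, by rw [hOc]; linarith⟩
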